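/- Let p(z) = (z - z_1)(z - z_2)⋯(z - z_n) be a monic complex polynomial (n ≥ 1) all of whose roots z_1, …, z_n lie in the open unit disk 𝔻 = {z ∈ ℂ : |z| < 1}. Then for every a ∈ ℂ with |a| = 1 one has |p'(a)/p(a)| > n/2. -/

import Mathlib

lemma my_derivative_finset_prod {ι : Type*} [DecidableEq ι] (s : Finset ι)
    (f : ι → Polynomial ℂ) :
    Polynomial.derivative (∏ i ∈ s, f i) =
      ∑ i ∈ s, (∏ j ∈ s.erase i, f j) * Polynomial.derivative (f i) := by
  induction s using Finset.induction with
  | empty => simp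
  | insert b t h ih =>
    rw [Finset.prod_insert h, Polynomial.derivative_mul, ih, Finset.sum_insert h,
      Finset.erase_insert h, Finset.mul_sum]
    congr 1
    · ring
    · refine Finset.sum_congr rfl fun i hi => ?_
      have hib : i ≠ b := fun e => h (e ▸ hi)
      rw [Finset.erase_insert_of_ne hib.symm,
        Finset.prod_insert (fun hb => h (Finset.mem_of_mem_erase hb))]
      ring

/-- If `p(z) = (z - z₁) ⋯ (z - zₙ)` is a monic complex polynomial (`n ≥ 1`) all of
whose roots lie in the open unit disk, then `|p'(a)/p(a)| > n/2` for every `a` on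
the unit circle. -/
theorem abs_deriv_div_self_gt_half_degree (n : ℕ) (hn : 1 ≤ n)
    (z : Fin n → ℂ) (hz : ∀ i, ‖z i‖ < 1)
    (p : Polynomial ℂ) (hp : p = ∏ i, (Polynomial.X - Polynomial.C (z i)))
    (a : ℂ) (ha : ‖a‖ = 1) :
    (n : ℝ) / 2 < ‖p.derivative.eval a / p.eval a‖ := by
  have ha0 : a ≠ 0 := by
    intro h; rw [h, norm_zero] at ha; norm_num at ha
  have hfac : ∀ i, a - z i ≠ 0 := by
    intro i h
    have := hz i
    rw [sub_eq_zero] at h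
    rw [← h, ha] at this
    norm_num at this
  have hpa : p.eval a = ∏ i, (a - z i) := by
    simp [hp, Polynomial.eval_prod]
  have hpa0 : p.eval a ≠ 0 := by
    rw [hpa]; exact Finset.prod_ne_zero_iff.2 fun i _ => hfac i
  have hderiv : p.derivative.eval a = ∑ i, ∏ j ∈ Finset.univ.erase i, (a - z j) := by
    rw [hp, my_derivative_finset_prod]
    simp [Polynomial.eval_finset_sum, Polynomial.eval_prod]
  have key : p.derivative.eval a / p.eval a = ∑ i, (a - z i)⁻¹ := by
    rw [div_eq_iff hpa0, hderiv, hpa, Finset.sum_mul]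
    refine Finset.sum_congr rfl fun i _ => ?_
    rw [← Finset.mul_prod_erase Finset.univ _ (Finset.mem_univ i)]
    field_simp [hfac i]
  rw [key]
  have hnorm : ‖∑ i, (a - z i)⁻¹‖ = ‖∑ i, a * (a - z i)⁻¹‖ := by
    rw [← Finset.mul_sum, norm_mul, ha, one_mul]
  rw [hnorm]
  have hre : ∀ i : Fin n, (1 : ℝ) / 2 < (a * (a - z i)⁻¹).re := by
    intro i
    have hv : ‖z i * a⁻¹‖ < 1 := by
      rw [norm_mul, norm_inv, ha]; simpa using hz i
    set v := z i * a⁻¹ with hvdef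
    set u := 1 - v with hudef
    have hu_eq : a * (a - z i)⁻¹ = u⁻¹ := by
      have : u = (a - z i) * a⁻¹ := by
        rw [hudef, hvdef, sub_mul, mul_inv_cancel₀ ha0]
      rw [this, mul_inv, inv_inv, mul_comm]
    have hu0 : u ≠ 0 := by
      intro h
      rw [hudef, sub_eq_zero] at h
      rw [← h, norm_one] at hv
      exact lt_irrefl _ hv
    rw [hu_eq, Complex.inv_re]
    have hpos : 0 < Complex.normSq u := Complex.normSq_pos.2 hu0
    rw [div_lt_div_iff₀ (by norm_num) hpos]
    have h1 : Complex.normSq u = 1 - 2 * v.re + Complex.normSq v := by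
      simp [hudef, Complex.normSq_apply, Complex.sub_re, Complex.sub_im]
      ring
    have h2 : u.re = 1 - v.re := by simp [hudef]
    have h3 : Complex.normSq v < 1 := by
      have := Complex.normSq_eq_norm_sq v
      have hv2 : ‖v‖ < 1 := hv
      nlinarith [Complex.normSq_eq_norm_sq v, norm_nonneg v]
    nlinarith
  calc (n : ℝ) / 2 = ∑ _i : Fin n, (1 : ℝ) / 2 := by
        simp [Finset.sum_const]; ring
    _ < ∑ i, (a * (a - z i)⁻¹).re := by
        refine Finset.sum_lt_sum_of_nonempty ?_ fun i _ => hre i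
        exact Finset.univ_nonempty_iff.2 (Fin.pos_iff_nonempty.mp hn)
    _ = (∑ i, a * (a - z i)⁻¹).re := by rw [Complex.re_sum]
    _ ≤ ‖∑ i, a * (a - z i)⁻¹‖ := Complex.re_le_norm _
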